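/- Let Γ = (G, σ) be a signed graph on n vertices, let 1 ≤ k ≤ n−1 be an integer, and let U ⊆ V(G). Define U_k = { A : A is a k-element subset of V(G) with |A ∩ U| even }. Then the k-token signed graph of the switched graph equals the switching of the k-token signed graph at U_k, that is, F_k(Γ^U) = F_k(Γ)^{U_k} (the same underlying token graph with the same signature). In particular, if two signed graphs on the same underlying graph are switching equivalent, then their k-token signed graphs are switching equivalent. -/

import Mathlib

open scoped Classical

/-- A signed graph: a simple graph together with a signature assigning a sign `±1`
(an element of `ℤˣ`) to each pair of vertices (only the values on edges are relevant). -/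
structure SignedGraph (V : Type*) where
  G : SimpleGraph V
  sign : V → V → ℤˣ
  sign_symm : ∀ u v, sign u v = sign v u

namespace SignedGraph

variable {V W : Type*}

/-- The sign function, as a function on unordered pairs. -/
def esign (Γ : SignedGraph V) : Sym2 V → ℤˣ :=
  Sym2.lift ⟨Γ.sign, Γ.sign_symm⟩

/-- The sign of a walk: the product of the signs of its edges. -/
def walkSign (Γ : SignedGraph V) {u v : V} (p : Γ.G.Walk u v) : ℤˣ :=
  (p.edges.map Γ.esign).prod

/-- A signed graph is balanced if every cycle is positive. -/
def Balanced (Γ : SignedGraph V) : Prop :=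
  ∀ ⦃u : V⦄ (p : Γ.G.Walk u u), p.IsCycle → Γ.walkSign p = 1

/-- Switching at a vertex subset `U`: reverse the sign of every edge with exactly one
endpoint in `U`. -/
noncomputable def switch (Γ : SignedGraph V) (U : Set V) : SignedGraph V where
  G := Γ.G
  sign u v := (if u ∈ U then (-1 : ℤˣ) else 1) * (if v ∈ U then (-1 : ℤˣ) else 1) * Γ.sign u v
  sign_symm u v := by
    try dsimp only
    rw [Γ.sign_symm u v, mul_comm (if u ∈ U then (-1 : ℤˣ) else 1) (if v ∈ U then (-1 : ℤˣ) else 1)]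

/-- Two signed graphs on the same vertex set are "the same signed graph" when they have the
same underlying graph and the same signature on every edge. -/
def SEq (Γ Γ' : SignedGraph V) : Prop :=
  Γ.G = Γ'.G ∧ ∀ u v, Γ.G.Adj u v → Γ.sign u v = Γ'.sign u v

/-- Switching equivalence of two signed graphs on the same vertex set. -/
def SwitchEquiv (Γ Γ' : SignedGraph V) : Prop :=
  ∃ U : Set V, (Γ.switch U).SEq Γ'

/-- A sign-preserving isomorphism of signed graphs. -/
structure Iso (Γ : SignedGraph V) (Γ' : SignedGraph W) where
  toEquiv : V ≃ W
  adj_iff : ∀ u v, Γ.G.Adj u v ↔ Γ'.G.Adj (toEquiv u) (toEquiv v)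
  sign_eq : ∀ u v, Γ.G.Adj u v → Γ.sign u v = Γ'.sign (toEquiv u) (toEquiv v)

/-- Switching isomorphism: `Γ'` is isomorphic to a switching of `Γ`. -/
def SwitchIso (Γ : SignedGraph V) (Γ' : SignedGraph W) : Prop :=
  ∃ U : Set V, Nonempty ((Γ.switch U).Iso Γ')

/-- The negation of a signed graph: all edge signs reversed. -/
def neg (Γ : SignedGraph V) : SignedGraph V where
  G := Γ.G
  sign u v := -Γ.sign u v
  sign_symm u v := by try dsimp only
                      rw [Γ.sign_symm]

variable [DecidableEq V]

/-- The underlying graph of the `k`-token graph: vertices are the `k`-subsets of `V`,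
with `A ~ B` when `A Δ B = {a, b}`, `a ∈ A`, `b ∈ B` and `a ~ b` in `G`. -/
def tokenAdj (G : SimpleGraph V) (k : ℕ) : SimpleGraph {A : Finset V // A.card = k} where
  Adj A B := ∃ a b, a ∈ A.1 ∧ b ∈ B.1 ∧ G.Adj a b ∧ symmDiff A.1 B.1 = {a, b}
  symm := by
    constructor
    rintro A B ⟨a, b, ha, hb, hab, hs⟩
    exact ⟨b, a, hb, ha, hab.symm, by rw [symmDiff_comm, hs, Finset.pair_comm]⟩
  loopless := by
    constructor
    rintro A ⟨a, b, ha, hb, hab, hs⟩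
    rw [symmDiff_self] at hs
    have h : a ∈ ({a, b} : Finset V) := Finset.mem_insert_self a {b}
    rw [← hs] at h
    simp at h

/-- The `k`-token signed graph: the edge obtained by moving a token along `ab`
carries the sign of `ab`. -/
def token (Γ : SignedGraph V) (k : ℕ) : SignedGraph {A : Finset V // A.card = k} where
  G := tokenAdj Γ.G k
  sign A B := ∏ a ∈ A.1 \ B.1, ∏ b ∈ B.1 \ A.1, Γ.sign a b
  sign_symm A B := by
    try dsimp only
    rw [Finset.prod_comm]
    exact Finset.prod_congr rfl fun b _ => Finset.prod_congr rfl fun a _ => Γ.sign_symm a b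

/-- The signed adjacency matrix (over `ℝ`). -/
noncomputable def adjMatrix (Γ : SignedGraph V) [Fintype V] : Matrix V V ℝ :=
  Matrix.of fun u v => if Γ.G.Adj u v then ((Γ.sign u v : ℤ) : ℝ) else 0

/-- The signed Laplacian matrix `L = D - A` (over `ℝ`). -/
noncomputable def lapMatrix (Γ : SignedGraph V) [Fintype V] : Matrix V V ℝ :=
  Matrix.diagonal (fun v => (Γ.G.degree v : ℝ)) - Γ.adjMatrix

/-- The quantity `ℓ_m(Γ)`. -/
noncomputable def ellm (Γ : SignedGraph V) [Fintype V] (m : ℕ) : ℝ :=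
  (∑ r ∈ Finset.range (m + 1),
      ((Γ.G.adjMatrix ℝ ^ r).trace - (Γ.adjMatrix ^ r).trace)) /
  (∑ r ∈ Finset.range (m + 1),
      ((Γ.G.adjMatrix ℝ ^ r).trace + |(Γ.adjMatrix ^ r).trace|))

/-- The unbalance level `ℓ(Γ) = max {ℓ_{n-1}(Γ), ℓ_n(Γ)}`. -/
noncomputable def unbalanceLevel (Γ : SignedGraph V) [Fintype V] : ℝ :=
  max (Γ.ellm (Fintype.card V - 1)) (Γ.ellm (Fintype.card V))

/-- The frustration index: the minimum number of negative edges whose deletion yields a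
balanced signed graph. -/
noncomputable def frustrationIndex (Γ : SignedGraph V) : ℕ :=
  sInf {m : ℕ | ∃ F : Finset (Sym2 V), F.card = m ∧ ↑F ⊆ Γ.G.edgeSet ∧
    (∀ e ∈ F, Γ.esign e = -1) ∧
    Balanced ⟨Γ.G.deleteEdges ↑F, Γ.sign, Γ.sign_symm⟩}

/-- The signed complement of a balanced signed graph, with respect to a switching function
`s` witnessing balance (`A_σ = S A S`): the signed graph on the complement graph with
adjacency matrix `S Ā S`, i.e. with sign `s u * s v` on each complement edge. -/
def scompl (Γ : SignedGraph V) (s : V → ℤˣ) : SignedGraph V where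
  G := Γ.Gᶜ
  sign u v := s u * s v
  sign_symm u v := mul_comm _ _

/-- The real diagonal `±1` matrix associated with `s : V → ℤˣ`. -/
noncomputable def diagS [Fintype V] (s : V → ℤˣ) : Matrix V V ℝ :=
  Matrix.diagonal fun v => ((s v : ℤ) : ℝ)

end SignedGraph

/-- The all-positive signed complete graph on `V`. -/
def allPos (V : Type*) : SignedGraph V := ⟨⊤, fun _ _ => 1, fun _ _ => rfl⟩

/-- The `(n; 1, k)`-binomial matrix. -/
noncomputable def binomB (V : Type*) [Fintype V] [DecidableEq V] (k : ℕ) :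
    Matrix {A : Finset V // A.card = k} V ℝ :=
  Matrix.of fun A v => if v ∈ A.1 then 1 else 0

/-- The `(n; k₁, k₂)`-binomial matrix. -/
noncomputable def binomB2 (V : Type*) [Fintype V] [DecidableEq V] (k₁ k₂ : ℕ) :
    Matrix {A : Finset V // A.card = k₂} {A : Finset V // A.card = k₁} ℝ :=
  Matrix.of fun A X => if X.1 ⊆ A.1 then 1 else 0

section Aux

variable {V : Type*} [DecidableEq V]

/-- From an adjacency witness in the token graph, the set differences are singletons. -/
lemma token_sdiff_eq {A B : Finset V} {a b : V} (ha : a ∈ A) (hb : b ∈ B)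
    (hab : a ≠ b) (hs : symmDiff A B = {a, b}) : A \ B = {a} ∧ B \ A = {b} := by
  have haB : a ∉ B := by
    intro haB
    have : a ∉ symmDiff A B := by
      rw [Finset.mem_symmDiff]; push_neg; exact ⟨fun _ => haB, fun _ => ha⟩
    exact this (hs ▸ Finset.mem_insert_self a {b})
  have hbA : b ∉ A := by
    intro hbA
    have : b ∉ symmDiff A B := by
      rw [Finset.mem_symmDiff]; push_neg; exact ⟨fun _ => hb, fun _ => hbA⟩
    exact this (hs ▸ Finset.mem_insert_of_mem (Finset.mem_singleton_self b))
  constructor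
  · ext x
    simp only [Finset.mem_sdiff, Finset.mem_singleton]
    constructor
    · rintro ⟨hxA, hxB⟩
      have : x ∈ symmDiff A B := Finset.mem_symmDiff.mpr (Or.inl ⟨hxA, hxB⟩)
      rw [hs] at this
      rcases Finset.mem_insert.mp this with h | h
      · exact h
      · exact absurd (Finset.mem_singleton.mp h ▸ hxA) hbA
    · rintro rfl; exact ⟨ha, haB⟩
  · ext x
    simp only [Finset.mem_sdiff, Finset.mem_singleton]
    constructor
    · rintro ⟨hxB, hxA⟩
      have : x ∈ symmDiff A B := Finset.mem_symmDiff.mpr (Or.inr ⟨hxB, hxA⟩)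
      rw [hs] at this
      rcases Finset.mem_insert.mp this with h | h
      · exact absurd (h ▸ hxB) haB
      · exact Finset.mem_singleton.mp h
    · rintro rfl; exact ⟨hb, hbA⟩

/-- The parity/sign identity for a single token move. -/
lemma sign_parity_eq {A B : Finset V} {a b : V} (ha : a ∈ A) (hb : b ∈ B)
    (hAB : A \ B = {a}) (hBA : B \ A = {b}) (U : Set V) :
    (if a ∈ U then (-1 : ℤˣ) else 1) * (if b ∈ U then (-1 : ℤˣ) else 1) =
    (if Even ((A.filter (· ∈ U)).card) then (-1 : ℤˣ) else 1) *
      (if Even ((B.filter (· ∈ U)).card) then (-1 : ℤˣ) else 1) := by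
  classical
  have haB : a ∉ B := by
    have : a ∈ A \ B := hAB ▸ Finset.mem_singleton_self a
    exact (Finset.mem_sdiff.mp this).2
  have hbA : b ∉ A := by
    have : b ∈ B \ A := hBA ▸ Finset.mem_singleton_self b
    exact (Finset.mem_sdiff.mp this).2
  have hAeq : A = insert a (A ∩ B) := by
    ext x
    simp only [Finset.mem_insert, Finset.mem_inter]
    constructor
    · intro hx
      by_cases hxB : x ∈ B
      · exact Or.inr ⟨hx, hxB⟩
      · left
        have : x ∈ A \ B := Finset.mem_sdiff.mpr ⟨hx, hxB⟩
        rw [hAB] at this; exact Finset.mem_singleton.mp this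
    · rintro (rfl | ⟨h, _⟩) <;> [exact ha; exact h]
  have hBeq : B = insert b (A ∩ B) := by
    ext x
    simp only [Finset.mem_insert, Finset.mem_inter]
    constructor
    · intro hx
      by_cases hxA : x ∈ A
      · exact Or.inr ⟨hxA, hx⟩
      · left
        have : x ∈ B \ A := Finset.mem_sdiff.mpr ⟨hx, hxA⟩
        rw [hBA] at this; exact Finset.mem_singleton.mp this
    · rintro (rfl | ⟨_, h⟩) <;> [exact hb; exact h]
  set C := A ∩ B with hC
  have haC : a ∉ C := fun h => haB (Finset.mem_inter.mp h).2
  have hbC : b ∉ C := fun h => hbA (Finset.mem_inter.mp h).1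
  have haC' : a ∉ C.filter (· ∈ U) := fun h => haC (Finset.mem_filter.mp h).1
  have hbC' : b ∉ C.filter (· ∈ U) := fun h => hbC (Finset.mem_filter.mp h).1
  have hpA : (A.filter (· ∈ U)).card =
      if a ∈ U then (C.filter (· ∈ U)).card + 1 else (C.filter (· ∈ U)).card := by
    rw [hAeq, Finset.filter_insert]
    split
    · rw [Finset.card_insert_of_notMem haC']
    · rfl
  have hpB : (B.filter (· ∈ U)).card =
      if b ∈ U then (C.filter (· ∈ U)).card + 1 else (C.filter (· ∈ U)).card := by
    rw [hBeq, Finset.filter_insert]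
    split
    · rw [Finset.card_insert_of_notMem hbC']
    · rfl
  rw [hpA, hpB]
  by_cases h1 : a ∈ U <;> by_cases h2 : b ∈ U <;>
    by_cases h3 : Even ((C.filter (· ∈ U)).card) <;>
    simp [h1, h2, h3, Nat.even_add_one]

end Aux

/-- `F_k(Γ^U) = F_k(Γ)^{U_k}` where `U_k = {A : |A ∩ U| even}`; in particular,
switching equivalent signed graphs have switching equivalent `k`-token signed graphs. -/
theorem token_of_switch {V : Type*} [Fintype V] [DecidableEq V] (n k : ℕ)
    (hn : Fintype.card V = n) (hk1 : 1 ≤ k) (hk2 : k ≤ n - 1)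
    (Γ : SignedGraph V) (U : Set V) :
    SignedGraph.SEq ((Γ.switch U).token k)
      ((Γ.token k).switch
        {T : {A : Finset V // A.card = k} | Even ((T.1.filter (· ∈ U)).card)}) ∧
    ∀ Γ' : SignedGraph V, Γ.SwitchEquiv Γ' →
      (Γ.token k).SwitchEquiv (Γ'.token k) := by
  classical
  -- main sign computation, for an arbitrary switching set `W`
  have key : ∀ (W : Set V) (A B : {A : Finset V // A.card = k}),
      (SignedGraph.tokenAdj Γ.G k).Adj A B →
      ((Γ.switch W).token k).sign A B =
        ((Γ.token k).switch
          {T : {A : Finset V // A.card = k} |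
            Even ((T.1.filter (· ∈ W)).card)}).sign A B := by
    rintro W A B ⟨a, b, ha, hb, hab, hs⟩
    obtain ⟨hAB, hBA⟩ := token_sdiff_eq ha hb hab.ne hs
    have hpar := sign_parity_eq ha hb hAB hBA W
    simp only [SignedGraph.token, SignedGraph.switch, Set.mem_setOf_eq,
      hAB, hBA, Finset.prod_singleton]
    split_ifs at hpar ⊢ <;> simp_all <;> exact absurd hpar (by decide)
  refine ⟨⟨rfl, fun A B hadj => key U A B hadj⟩, ?_⟩
  rintro Γ' ⟨W, hG, hsign⟩
  refine ⟨{T : {A : Finset V // A.card = k} |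
    Even ((T.1.filter (· ∈ W)).card)}, ?_, ?_⟩
  · exact congrArg (fun G => SignedGraph.tokenAdj G k) hG
  · rintro A B hadj
    obtain ⟨a, b, ha, hb, hab, hs⟩ := hadj
    obtain ⟨hAB, hBA⟩ := token_sdiff_eq ha hb hab.ne hs
    rw [← key W A B ⟨a, b, ha, hb, hab, hs⟩]
    show (∏ x ∈ A.1 \ B.1, ∏ y ∈ B.1 \ A.1, (Γ.switch W).sign x y) =
      (∏ x ∈ A.1 \ B.1, ∏ y ∈ B.1 \ A.1, Γ'.sign x y)
    rw [hAB, hBA, Finset.prod_singleton, Finset.prod_singleton,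
      Finset.prod_singleton, Finset.prod_singleton]
    exact hsign a b hab
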